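/- Let A be a real 2k×2k matrix of finite order with no eigenvalue equal to 1. Then det(A − I) > 0. -/

import Mathlib

open Polynomial Matrix

lemma aux_eval_charpoly {n : ℕ} (A : Matrix (Fin n) (Fin n) ℝ) (t : ℝ) :
    A.charpoly.eval t = (t • (1 : Matrix (Fin n) (Fin n) ℝ) - A).det := by
  rw [Matrix.charpoly, _root_.eval_det, Matrix.matPolyEquiv_charmatrix]
  simp [Matrix.scalar, Algebra.algebraMap_eq_smul_one]

lemma aux_mulVec_pow {n : ℕ} (A : Matrix (Fin n) (Fin n) ℝ) (v : Fin n → ℝ) (t : ℝ)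
    (h : A.mulVec v = t • v) (m : ℕ) : (A ^ m).mulVec v = t ^ m • v := by
  induction m with
  | zero => simp
  | succ m ih =>
    rw [pow_succ, ← Matrix.mulVec_mulVec, h, Matrix.mulVec_smul, ih, smul_smul, pow_succ,
      mul_comm]

/-- A real `2k × 2k` matrix of finite order having no eigenvalue equal to `1`
satisfies `det(A − I) > 0`. -/
theorem det_sub_one_pos_of_finite_order (k : ℕ)
    (A : Matrix (Fin (2 * k)) (Fin (2 * k)) ℝ)
    (m : ℕ) (hm : 0 < m) (hA : A ^ m = 1)
    (hone : ∀ v : Fin (2 * k) → ℝ, A.mulVec v = v → v = 0) :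
    0 < (A - 1).det := by
  rcases Nat.eq_zero_or_pos k with hk | hk
  · subst hk
    haveI : IsEmpty (Fin (2 * 0)) := by rw [show 2 * 0 = 0 from rfl]; infer_instance
    simp [Matrix.det_isEmpty]
  -- det (A - 1) = det (1 - A) since dimension is even
  have hdetswap : (A - 1).det = ((1 : ℝ) • (1 : Matrix (Fin (2 * k)) (Fin (2 * k)) ℝ) - A).det := by
    rw [show (1 : ℝ) • (1 : Matrix (Fin (2 * k)) (Fin (2 * k)) ℝ) - A = -(A - 1) by
      rw [one_smul]; exact (neg_sub A 1).symm, Matrix.det_neg]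
    simp [Fintype.card_fin]
  set p := A.charpoly with hp
  -- no roots of the characteristic polynomial in [1, ∞)
  have hroots : ∀ t : ℝ, 1 ≤ t → p.eval t ≠ 0 := by
    intro t ht h0
    rw [hp, aux_eval_charpoly] at h0
    obtain ⟨v, hv, hveq⟩ := (Matrix.exists_mulVec_eq_zero_iff).2 h0
    have hAv : A.mulVec v = t • v := by
      have h' : t • v - A.mulVec v = 0 := by
        rw [← hveq, Matrix.sub_mulVec, Matrix.smul_mulVec, Matrix.one_mulVec]
      exact (sub_eq_zero.mp h').symm
    have hpow : v = t ^ m • v := by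
      have := aux_mulVec_pow A v t hAv m
      rwa [hA, Matrix.one_mulVec] at this
    have htm : t ^ m = 1 := by
      by_contra hne
      have : (t ^ m - 1) • v = 0 := by
        rw [sub_smul, one_smul, ← hpow, sub_self]
      rcases smul_eq_zero.mp this with h | h
      · exact hne (by linarith [sub_eq_zero.mp h])
      · exact hv h
    have ht1 : t = 1 := by
      rcases (pow_eq_one_iff_cases.mp htm) with h | h | h
      · omega
      · exact h
      · linarith [h.1]
    subst ht1
    have : v = 0 := hone v (by simpa using hAv)
    exact hv this
  -- p(1) ≠ 0
  have hne1 : p.eval 1 ≠ 0 := hroots 1 le_rfl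
  -- p is monic of positive degree
  have hmono : p.Monic := A.charpoly_monic
  have hdeg : 0 < p.degree := by
    have : p.natDegree = 2 * k := by
      rw [hp, Matrix.charpoly_natDegree_eq_dim, Fintype.card_fin]
    rw [← Polynomial.natDegree_pos_iff_degree_pos, this]
    omega
  -- p tends to ∞, so it is eventually positive
  have htop : Filter.Tendsto (fun x => p.eval x) Filter.atTop Filter.atTop :=
    p.tendsto_atTop_of_leadingCoeff_nonneg hdeg (by rw [hmono.leadingCoeff]; norm_num)
  obtain ⟨b, hb⟩ := (htop.eventually_ge_atTop 1).exists_forall_of_atTop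
  -- p(1) > 0 by the intermediate value theorem
  have hpos : 0 < p.eval 1 := by
    rcases lt_trichotomy (p.eval 1) 0 with h | h | h
    · exfalso
      set c := max b 2 with hc
      have hc1 : (1 : ℝ) ≤ c := by
        have : (2 : ℝ) ≤ c := le_max_right _ _
        linarith
      have hpc : (1 : ℝ) ≤ p.eval c := hb c (le_max_left _ _)
      obtain ⟨x, hx, hx0⟩ := intermediate_value_Icc hc1
        (p.continuous.continuousOn (s := Set.Icc 1 c))
        (Set.mem_Icc.mpr ⟨le_of_lt h, by linarith⟩)
      exact hroots x hx.1 hx0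
    · exact absurd h hne1
    · exact h
  rw [hdetswap, ← aux_eval_charpoly]
  exact hpos
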